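/- arXiv:2205.04191 — 6 statements merged into one kernel-verified Lean document; each statement's English description precedes it below -/
import Mathlib

section
/- A 2×2 complex matrix Z is a strict contraction (operator norm < 1) if and only if the diagonal entries of I - Z*Z are positive and det(I - Z*Z) > 0. Equivalently, for Z_ν = [[y₁/(nλ₀), νw],[w/ν, y₂/n]] with w² = (y₁y₂-n²q)/(n²λ₀), ‖Z_ν‖ < 1 if and only if ν² < n²|λ₀|(1 - |y₂|²/n²)/|y₁y₂ - n²q| and ν² + 1/ν² < n²|λ₀|(1 - |y₁|²/(n²|λ₀|²) - |y₂|²/n² + |q|²/(|λ₀|²))/|y₁y₂ - n²q|. -/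
open Matrix Complex

/-- Operator norm of a 2×2 complex matrix, acting on `EuclideanSpace ℂ (Fin 2)`. -/
noncomputable def opNorm (Z : Matrix (Fin 2) (Fin 2) ℂ) : ℝ :=
  ‖Matrix.toEuclideanCLM (𝕜 := ℂ) (n := Fin 2) Z‖

open ComplexConjugate in
lemma normsq_apply' (a b c d : ℂ) (x : EuclideanSpace ℂ (Fin 2)) :
    ‖Matrix.toEuclideanCLM (𝕜 := ℂ) !![a,b;c,d] x‖^2
      = Complex.normSq (a * x 0 + b * x 1) + Complex.normSq (c * x 0 + d * x 1) := by
  have h0 := congrFun (Matrix.ofLp_toEuclideanCLM !![a,b;c,d] x) 0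
  have h1 := congrFun (Matrix.ofLp_toEuclideanCLM !![a,b;c,d] x) 1
  rw [EuclideanSpace.norm_eq, Real.sq_sqrt (by positivity)]
  rw [Fin.sum_univ_two, h0, h1]
  simp [Matrix.toLin'_apply, Matrix.mulVec, dotProduct, Fin.sum_univ_two, Complex.sq_norm]

open ComplexConjugate in
lemma Qexp' (a b c d z1 z2 : ℂ) :
    Complex.normSq (a*z1+b*z2) + Complex.normSq (c*z1+d*z2)
      = (Complex.normSq a + Complex.normSq c) * Complex.normSq z1
        + (Complex.normSq b + Complex.normSq d) * Complex.normSq z2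
        + 2 * ((a * conj b + c * conj d) * (z1 * conj z2)).re := by
  simp only [Complex.normSq_apply, Complex.mul_re, Complex.mul_im, Complex.add_re,
    Complex.add_im, Complex.conj_re, Complex.conj_im]
  ring

lemma main_ineq' (a b c d : ℂ) (C : ℝ)
    (h : ∀ x : EuclideanSpace ℂ (Fin 2),
      ‖Matrix.toEuclideanCLM (𝕜 := ℂ) !![a,b;c,d] x‖ ≤ C * ‖x‖) (z1 z2 : ℂ) :
    Complex.normSq (a*z1+b*z2) + Complex.normSq (c*z1+d*z2)
      ≤ C^2 * (Complex.normSq z1 + Complex.normSq z2) := by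
  set x : EuclideanSpace ℂ (Fin 2) := (WithLp.equiv 2 (Fin 2 → ℂ)).symm ![z1, z2] with hxdef
  have hx0 : x 0 = z1 := rfl
  have hx1 : x 1 = z2 := rfl
  have hnx : ‖x‖^2 = Complex.normSq z1 + Complex.normSq z2 := by
    rw [EuclideanSpace.norm_eq, Real.sq_sqrt (by positivity), Fin.sum_univ_two, hx0, hx1]
    simp [Complex.sq_norm]
  have h2 : ‖Matrix.toEuclideanCLM (𝕜 := ℂ) !![a,b;c,d] x‖^2 ≤ (C * ‖x‖)^2 :=
    pow_le_pow_left₀ (norm_nonneg _) (h x) 2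
  rw [normsq_apply', hx0, hx1, mul_pow, hnx] at h2
  exact h2

lemma amgm' (P S t u v : ℝ) (hP : 0 ≤ P) (hS : 0 ≤ S) (ht : 0 ≤ t) (h : t^2 ≤ P*S)
    (hu : 0 ≤ u) (hv : 0 ≤ v) : 2*t*u*v ≤ P*u^2 + S*v^2 := by
  nlinarith [mul_le_mul_of_nonneg_right h (sq_nonneg (u*v)), sq_nonneg (P*u^2 - S*v^2),
    mul_nonneg (mul_nonneg ht hu) hv, mul_nonneg hP (sq_nonneg u), mul_nonneg hS (sq_nonneg v)]

lemma e1gen' (τ : ℂ) (r : ℝ) :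
    Complex.normSq ((starRingEnd ℂ) τ * (r:ℂ)) = Complex.normSq τ * r^2 := by
  rw [Complex.normSq_mul, Complex.normSq_conj, Complex.normSq_ofReal]; ring

lemma e2gen' (τ : ℂ) (r : ℝ) :
    (τ * ((starRingEnd ℂ) τ * (r:ℂ) * (starRingEnd ℂ) 1)).re = Complex.normSq τ * r := by
  simp only [_root_.map_one, mul_one, Complex.one_re, Complex.mul_re, Complex.mul_im,
    Complex.conj_re, Complex.conj_im, Complex.ofReal_re, Complex.ofReal_im, Complex.normSq_apply]
  ring

lemma quad_aux' (A S T : ℝ) (hA : 0 < A) (h : ∀ r : ℝ, A * (T*r^2) - 2*(T*r) + S ≥ 0) :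
    T ≤ A * S := by
  have h1 := h (1/A)
  have h2 : A*(T*(1/A)^2) = T/A := by field_simp
  have h3 : T*(1/A) = T/A := by ring
  rw [h2, h3] at h1
  have h4 : T/A ≤ S := by linarith
  calc T = (T/A) * A := by field_simp
    _ ≤ S * A := mul_le_mul_of_nonneg_right h4 (le_of_lt hA)
    _ = A * S := mul_comm _ _

open ComplexConjugate in
lemma ptwise' (a b c d : ℂ) (μ : ℝ) (hμ0 : 0 < μ)
    (hpμ : Complex.normSq a + Complex.normSq c ≤ μ)
    (hsμ : Complex.normSq b + Complex.normSq d ≤ μ)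
    (htμ : Complex.normSq (a * conj b + c * conj d)
      ≤ (μ - (Complex.normSq a + Complex.normSq c))
          * (μ - (Complex.normSq b + Complex.normSq d))) :
    opNorm !![a,b;c,d] ≤ Real.sqrt μ := by
  refine ContinuousLinearMap.opNorm_le_bound _ (Real.sqrt_nonneg _) (fun x => ?_)
  have h2 : ‖Matrix.toEuclideanCLM (𝕜 := ℂ) !![a,b;c,d] x‖^2 ≤ (Real.sqrt μ * ‖x‖)^2 := by
    rw [mul_pow, Real.sq_sqrt (le_of_lt hμ0), normsq_apply']
    have hnx : ‖x‖^2 = Complex.normSq (x 0) + Complex.normSq (x 1) := by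
      rw [EuclideanSpace.norm_eq, Real.sq_sqrt (by positivity), Fin.sum_univ_two]
      simp [Complex.sq_norm]
    rw [hnx, Qexp']
    have hre : ((a * conj b + c * conj d) * (x 0 * conj (x 1))).re
        ≤ ‖a * conj b + c * conj d‖ * (‖x 0‖ * ‖x 1‖) := by
      calc ((a * conj b + c * conj d) * (x 0 * conj (x 1))).re
          ≤ ‖(a * conj b + c * conj d) * (x 0 * conj (x 1))‖ := Complex.re_le_norm _
        _ = ‖a * conj b + c * conj d‖ * (‖x 0‖ * ‖x 1‖) := by
            rw [norm_mul, norm_mul, Complex.norm_conj]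
    have hamgm := amgm' (μ - (Complex.normSq a + Complex.normSq c))
      (μ - (Complex.normSq b + Complex.normSq d))
      (‖a * conj b + c * conj d‖) (‖x 0‖) (‖x 1‖)
      (by linarith) (by linarith) (norm_nonneg _)
      (by rw [Complex.sq_norm]; exact htμ) (norm_nonneg _) (norm_nonneg _)
    have e0 : Complex.normSq (x 0) = ‖x 0‖^2 := (Complex.sq_norm _).symm
    have e1 : Complex.normSq (x 1) = ‖x 1‖^2 := (Complex.sq_norm _).symm
    rw [e0, e1]
    nlinarith [hre, hamgm]
  calc ‖Matrix.toEuclideanCLM (𝕜 := ℂ) !![a,b;c,d] x‖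
      = Real.sqrt (‖Matrix.toEuclideanCLM (𝕜 := ℂ) !![a,b;c,d] x‖^2) :=
        (Real.sqrt_sq (norm_nonneg _)).symm
    _ ≤ Real.sqrt ((Real.sqrt μ * ‖x‖)^2) := Real.sqrt_le_sqrt h2
    _ = Real.sqrt μ * ‖x‖ := Real.sqrt_sq (by positivity)

open ComplexConjugate in
lemma key' (a b c d : ℂ) :
    opNorm !![a,b;c,d] < 1 ↔
      (Complex.normSq a + Complex.normSq c < 1 ∧ Complex.normSq b + Complex.normSq d < 1 ∧
        Complex.normSq (a * conj b + c * conj d) <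
          (1 - (Complex.normSq a + Complex.normSq c))
            * (1 - (Complex.normSq b + Complex.normSq d))) := by
  have hp0 : 0 ≤ Complex.normSq a + Complex.normSq c :=
    add_nonneg (Complex.normSq_nonneg _) (Complex.normSq_nonneg _)
  have hs0 : 0 ≤ Complex.normSq b + Complex.normSq d :=
    add_nonneg (Complex.normSq_nonneg _) (Complex.normSq_nonneg _)
  set p := Complex.normSq a + Complex.normSq c with hpdef
  set s := Complex.normSq b + Complex.normSq d with hsdef
  set τ := a * conj b + c * conj d with hτdef
  set T := Complex.normSq τ with hTdef
  have ht0 : 0 ≤ T := Complex.normSq_nonneg _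
  constructor
  · intro h
    set C := opNorm !![a,b;c,d] with hCdef
    have hC0 : 0 ≤ C := norm_nonneg _
    have hb : ∀ x : EuclideanSpace ℂ (Fin 2),
        ‖Matrix.toEuclideanCLM (𝕜 := ℂ) !![a,b;c,d] x‖ ≤ C * ‖x‖ :=
      fun x => ContinuousLinearMap.le_opNorm _ x
    have main := main_ineq' a b c d C hb
    have hC1 : C^2 < 1 := by nlinarith
    have hp : p ≤ C^2 := by rw [hpdef]; simpa using main 1 0
    have hs : s ≤ C^2 := by rw [hsdef]; simpa using main 0 1
    have hp1 : p < 1 := lt_of_le_of_lt hp hC1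
    have hs1 : s < 1 := lt_of_le_of_lt hs hC1
    refine ⟨hp1, hs1, ?_⟩
    rcases eq_or_lt_of_le ht0 with h0 | htpos
    · rw [← h0]
      nlinarith
    · have main2 : ∀ r : ℝ, p*(T*r^2) + s + 2*(T*r) ≤ C^2*(T*r^2+1) := by
        intro r
        have h5 := main ((conj τ) * (r:ℝ)) 1
        rw [Qexp'] at h5
        rw [← hpdef, ← hsdef, ← hτdef, e1gen' τ r, e2gen' τ r, ← hTdef] at h5
        simpa using h5
      have hCp : p < C^2 := by
        rcases lt_or_ge p (C^2) with h' | h'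
        · exact h'
        · exfalso
          have h6 := main2 ((C^2 - s + 1)/(2*T))
          have hT0 : T ≠ 0 := ne_of_gt htpos
          have expand : C^2*(T*((C^2 - s + 1)/(2*T))^2) ≤ p*(T*((C^2 - s + 1)/(2*T))^2) :=
            mul_le_mul_of_nonneg_right h' (by positivity)
          have hTr : 2*(T*((C^2 - s + 1)/(2*T))) = C^2 - s + 1 := by
            field_simp
          linarith
      have h7 : ∀ r : ℝ, (C^2 - p) * (T*r^2) - 2*(T*r) + (C^2 - s) ≥ 0 := by
        intro r; have := main2 r; nlinarith [this]
      have htle : T ≤ (C^2 - p) * (C^2 - s) := quad_aux' _ _ _ (by linarith) h7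
      nlinarith
  · rintro ⟨hp1, hs1, hts⟩
    set δ := (1-p)*(1-s) - T with hδdef
    have hδ0 : 0 < δ := by rw [hδdef]; linarith
    set ε := min (min ((1-p)/2) ((1-s)/2)) (δ/2) with hεdef
    have hε0 : 0 < ε := lt_min (lt_min (by linarith) (by linarith)) (by linarith)
    have hεp : ε ≤ (1-p)/2 := le_trans (min_le_left _ _) (min_le_left _ _)
    have hεs : ε ≤ (1-s)/2 := le_trans (min_le_left _ _) (min_le_right _ _)
    have hεδ : ε ≤ δ/2 := min_le_right _ _
    have hμ1 : 1 - ε < 1 := by linarith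
    have hμ0 : 0 < 1 - ε := by linarith
    have hpμ : p ≤ 1 - ε := by linarith
    have hsμ : s ≤ 1 - ε := by linarith
    have htμ : T ≤ ((1-ε) - p) * ((1-ε) - s) := by
      nlinarith [mul_nonneg (le_of_lt hε0) hp0, mul_nonneg (le_of_lt hε0) hs0, sq_nonneg ε,
        hεδ, hδdef]
    have hres : opNorm !![a,b;c,d] ≤ Real.sqrt (1-ε) :=
      ptwise' a b c d (1-ε) hμ0 hpμ hsμ htμ
    calc opNorm !![a,b;c,d] ≤ Real.sqrt (1-ε) := hres
      _ < 1 := by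
        have h9 : Real.sqrt (1-ε) < Real.sqrt 1 := Real.sqrt_lt_sqrt (le_of_lt hμ0) hμ1
        simpa using h9

lemma aux1' (P S E t : ℝ) (hl : P*S - t = E) (h : t < (1-P)*(1-S)) : P + S < 1 + E := by
  nlinarith

lemma aux2' (P S E t : ℝ) (hl : P*S - t = E) (h : P + S < 1 + E) : t < (1-P)*(1-S) := by
  nlinarith

lemma aux3' (P S t : ℝ) (hS : S < 1) (ht : 0 ≤ t) (h : t < (1-P)*(1-S)) : P < 1 := by
  nlinarith

lemma real_iff' (Nr L K Y1 Y2 Qa t ν : ℝ) (hN : 0 < Nr) (hL : 0 < L) (hK : 0 < K) (hν : 0 < ν)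
    (ht0 : 0 ≤ t)
    (hlag : (Y1^2/(Nr^2*L^2) + (K/(Nr^2*L))/ν^2) * (ν^2*(K/(Nr^2*L)) + Y2^2/Nr^2) - t
              = Qa^2/L^2) :
    ((Y1^2/(Nr^2*L^2) + (K/(Nr^2*L))/ν^2 < 1 ∧ ν^2*(K/(Nr^2*L)) + Y2^2/Nr^2 < 1 ∧
        t < (1 - (Y1^2/(Nr^2*L^2) + (K/(Nr^2*L))/ν^2)) * (1 - (ν^2*(K/(Nr^2*L)) + Y2^2/Nr^2)))
      ↔ (ν^2 < Nr^2*L*(1 - Y2^2/Nr^2)/K ∧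
          ν^2 + 1/ν^2 < Nr^2*L*(1 - Y1^2/(Nr^2*L^2) - Y2^2/Nr^2 + Qa^2/L^2)/K)) := by
  have hM : 0 < Nr^2*L := by positivity
  have hM2 : 0 < Nr^2*L^2*ν^2 := by positivity
  have h1 : (ν^2*(K/(Nr^2*L)) + Y2^2/Nr^2 < 1) ↔ ν^2 < Nr^2*L*(1 - Y2^2/Nr^2)/K := by
    rw [lt_div_iff₀ hK]
    have e : (ν^2*(K/(Nr^2*L)) + Y2^2/Nr^2) * (Nr^2*L) = ν^2*K + Y2^2*L := by
      field_simp
    have e2 : Nr^2*L*(1 - Y2^2/Nr^2) = Nr^2*L - Y2^2*L := by field_simp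
    constructor <;> intro h
    · have h3 := mul_lt_mul_of_pos_right h hM
      rw [e, one_mul] at h3
      linarith [e2]
    · refine lt_of_mul_lt_mul_right ?_ (le_of_lt hM)
      rw [e, one_mul]
      linarith [e2]
  have h2 : (t < (1 - (Y1^2/(Nr^2*L^2) + (K/(Nr^2*L))/ν^2))
          * (1 - (ν^2*(K/(Nr^2*L)) + Y2^2/Nr^2)))
      ↔ ν^2 + 1/ν^2 < Nr^2*L*(1 - Y1^2/(Nr^2*L^2) - Y2^2/Nr^2 + Qa^2/L^2)/K := by
    rw [lt_div_iff₀ hK]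
    have e : (Y1^2/(Nr^2*L^2) + (K/(Nr^2*L))/ν^2 + (ν^2*(K/(Nr^2*L)) + Y2^2/Nr^2))
        * (Nr^2*L^2*ν^2) = Y1^2*ν^2 + K*L + ν^2*ν^2*K*L + Y2^2*L^2*ν^2 := by
      field_simp; ring
    have e2 : (1 + Qa^2/L^2) * (Nr^2*L^2*ν^2) = Nr^2*L^2*ν^2 + Qa^2*Nr^2*ν^2 := by
      field_simp
    have e3 : ((ν^2 + 1/ν^2)*K) * (L*ν^2) = ν^2*ν^2*K*L + K*L := by field_simp
    have e4 : (Nr^2*L*(1 - Y1^2/(Nr^2*L^2) - Y2^2/Nr^2 + Qa^2/L^2)) * (L*ν^2)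
        = Nr^2*L^2*ν^2 - Y1^2*ν^2 - Y2^2*L^2*ν^2 + Qa^2*Nr^2*ν^2 := by
      field_simp
    have hLν : (0:ℝ) < L*ν^2 := by positivity
    constructor <;> intro h
    · have hps : (Y1^2/(Nr^2*L^2) + (K/(Nr^2*L))/ν^2) + (ν^2*(K/(Nr^2*L)) + Y2^2/Nr^2)
          < 1 + Qa^2/L^2 := aux1' _ _ _ _ hlag h
      have h3 := mul_lt_mul_of_pos_right hps hM2
      rw [e, e2] at h3
      refine lt_of_mul_lt_mul_right ?_ (le_of_lt hLν)
      rw [e3, e4]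
      linarith
    · have h3 := mul_lt_mul_of_pos_right h hLν
      rw [e3, e4] at h3
      have hps : (Y1^2/(Nr^2*L^2) + (K/(Nr^2*L))/ν^2) + (ν^2*(K/(Nr^2*L)) + Y2^2/Nr^2)
          < 1 + Qa^2/L^2 := by
        refine lt_of_mul_lt_mul_right ?_ (le_of_lt hM2)
        rw [e, e2]
        linarith
      exact aux2' _ _ _ _ hlag hps
  constructor
  · rintro ⟨c1, c2, c3⟩
    exact ⟨h1.mp c2, h2.mp c3⟩
  · rintro ⟨r1, r2⟩
    have c2 := h1.mpr r1
    have c3 := h2.mpr r2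
    exact ⟨aux3' _ _ _ c2 ht0 c3, c2, c3⟩

open ComplexConjugate in
lemma lagrange' (a b c d : ℂ) :
    (Complex.normSq a + Complex.normSq c) * (Complex.normSq b + Complex.normSq d)
      - Complex.normSq (a * conj b + c * conj d) = Complex.normSq (a*d - b*c) := by
  simp only [Complex.normSq_apply, Complex.mul_re, Complex.mul_im, Complex.add_re,
    Complex.add_im, Complex.sub_re, Complex.sub_im, Complex.conj_re, Complex.conj_im]
  ring

/-- for `Z_ν = [[y₁/(nλ₀), νw],[w/ν, y₂/n]]` with
`w² = (y₁y₂-n²q)/(n²λ₀)`, `‖Z_ν‖ < 1` iff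
`ν² < n²|λ₀|(1 - |y₂|²/n²)/|y₁y₂ - n²q|` and
`ν² + 1/ν² < n²|λ₀|(1 - |y₁|²/(n²|λ₀|²) - |y₂|²/n² + |q|²/|λ₀|²)/|y₁y₂ - n²q|`. -/
theorem stmt1 (n : ℕ) (hn : 0 < n) (lam0 y1 y2 q w : ℂ)
    (hlam0 : lam0 ≠ 0) (hlam1 : ‖lam0‖ < 1)
    (hq : y1 * y2 ≠ (n : ℂ) ^ 2 * q)
    (ν : ℝ) (hν : 0 < ν)
    (hw : w ^ 2 = (y1 * y2 - (n : ℂ) ^ 2 * q) / ((n : ℂ) ^ 2 * lam0))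
    (Z : Matrix (Fin 2) (Fin 2) ℂ)
    (hZ : Z = !![y1 / ((n : ℂ) * lam0), (ν : ℂ) * w; w / (ν : ℂ), y2 / (n : ℂ)]) :
    opNorm Z < 1 ↔
      (ν ^ 2 < (n : ℝ) ^ 2 * ‖lam0‖ * (1 - ‖y2‖ ^ 2 / (n : ℝ) ^ 2)
          / ‖y1 * y2 - (n : ℂ) ^ 2 * q‖ ∧
        ν ^ 2 + 1 / ν ^ 2 <
          (n : ℝ) ^ 2 * ‖lam0‖ *
              (1 - ‖y1‖ ^ 2 / ((n : ℝ) ^ 2 * ‖lam0‖ ^ 2)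
                - ‖y2‖ ^ 2 / (n : ℝ) ^ 2
                + ‖q‖ ^ 2 / ‖lam0‖ ^ 2)
            / ‖y1 * y2 - (n : ℂ) ^ 2 * q‖) := by
  subst hZ
  rw [key']
  have hnC : (n:ℂ) ≠ 0 := Nat.cast_ne_zero.mpr hn.ne'
  have hνC : (ν:ℂ) ≠ 0 := Complex.ofReal_ne_zero.mpr hν.ne'
  have hN : (0:ℝ) < (n:ℝ) := Nat.cast_pos.mpr hn
  have hL : 0 < ‖lam0‖ := norm_pos_iff.mpr hlam0
  have hKne : y1*y2 - (n:ℂ)^2*q ≠ 0 := sub_ne_zero.mpr hq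
  have hK : 0 < ‖y1*y2 - (n:ℂ)^2*q‖ := norm_pos_iff.mpr hKne
  have hW2 : ‖w‖ ^ 2
      = ‖y1*y2-(n:ℂ)^2*q‖ / ((n:ℝ)^2 * ‖lam0‖) := by
    have h := congrArg (‖·‖) hw
    rwa [norm_pow, norm_div, norm_mul, norm_pow, Complex.norm_natCast] at h
  have e_a : Complex.normSq (y1/((n:ℂ)*lam0))
      = ‖y1‖^2/((n:ℝ)^2 * ‖lam0‖^2) := by
    rw [Complex.normSq_eq_norm_sq, norm_div, norm_mul, Complex.norm_natCast, div_pow, mul_pow]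
  have e_b : Complex.normSq ((ν:ℂ)*w)
      = ν^2 * (‖y1*y2-(n:ℂ)^2*q‖ / ((n:ℝ)^2 * ‖lam0‖)) := by
    rw [← hW2, Complex.normSq_eq_norm_sq, norm_mul, Complex.norm_real, Real.norm_eq_abs, mul_pow, _root_.sq_abs]
  have e_c : Complex.normSq (w/(ν:ℂ))
      = (‖y1*y2-(n:ℂ)^2*q‖ / ((n:ℝ)^2 * ‖lam0‖))/ν^2 := by
    rw [← hW2, Complex.normSq_eq_norm_sq, norm_div, Complex.norm_real, Real.norm_eq_abs, div_pow, _root_.sq_abs]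
  have e_d : Complex.normSq (y2/(n:ℂ)) = ‖y2‖^2/(n:ℝ)^2 := by
    rw [Complex.normSq_eq_norm_sq, norm_div, Complex.norm_natCast, div_pow]
  have hdet : (y1/((n:ℂ)*lam0)) * (y2/(n:ℂ)) - ((ν:ℂ)*w) * (w/(ν:ℂ)) = q/lam0 := by
    have h1 : ((ν:ℂ)*w)*(w/(ν:ℂ)) = w^2 := by field_simp
    rw [h1, hw]
    field_simp
    ring
  have e_det : Complex.normSq (q/lam0) = ‖q‖^2/‖lam0‖^2 := by
    rw [Complex.normSq_eq_norm_sq, norm_div, div_pow]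
  have hlag := lagrange' (y1/((n:ℂ)*lam0)) ((ν:ℂ)*w) (w/(ν:ℂ)) (y2/(n:ℂ))
  rw [hdet, e_det, e_a, e_b, e_c, e_d] at hlag
  rw [e_a, e_b, e_c, e_d]
  exact real_iff' _ _ _ _ _ _ _ _ hN hL hK hν (Complex.normSq_nonneg _) hlag
end

section
/- Let R = |λ₀|(C² - |y₂|²)/|y₁y₂ - C²q| and X = (|λ₀|/|y₁y₂ - C²q|)·(C² - |y₁|²/|λ₀|² - |y₂|² + C²|q|²/|λ₀|²), where C > 0 and y₁y₂ ≠ C²q. Then R + 1/R - X = C²|y₁ - ȳ₂q|² / (|λ₀|(C² - |y₂|²)|y₁y₂ - C²q|); in particular, if |y₂| < C then R + 1/R ≥ X, with strict inequality when y₁ ≠ ȳ₂q. -/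
open Complex

/-- with `R = |λ₀|(C² - |y₂|²)/|y₁y₂ - C²q|` and
`X = (|λ₀|/|y₁y₂ - C²q|)(C² - |y₁|²/|λ₀|² - |y₂|² + C²|q|²/|λ₀|²)`,
`R + 1/R - X = C²|y₁ - ȳ₂q|²/(|λ₀|(C² - |y₂|²)|y₁y₂ - C²q|)`;
if `|y₂| < C` then `R + 1/R ≥ X`, strictly when `y₁ ≠ ȳ₂q`. -/
theorem stmt2 (C : ℝ) (hC : 0 < C) (lam0 y1 y2 q : ℂ) (hlam0 : lam0 ≠ 0)
    (hq : y1 * y2 ≠ (C : ℂ) ^ 2 * q) (hy2 : ‖y2‖ < C)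
    (R X : ℝ)
    (hR : R = ‖lam0‖ * (C ^ 2 - ‖y2‖ ^ 2)
        / ‖y1 * y2 - (C : ℂ) ^ 2 * q‖)
    (hX : X = ‖lam0‖ / ‖y1 * y2 - (C : ℂ) ^ 2 * q‖
        * (C ^ 2 - ‖y1‖ ^ 2 / ‖lam0‖ ^ 2
            - ‖y2‖ ^ 2 + C ^ 2 * ‖q‖ ^ 2 / ‖lam0‖ ^ 2)) :
    R + 1 / R - X =
        C ^ 2 * ‖y1 - (starRingEnd ℂ) y2 * q‖ ^ 2
          / (‖lam0‖ * (C ^ 2 - ‖y2‖ ^ 2)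
              * ‖y1 * y2 - (C : ℂ) ^ 2 * q‖) ∧
      X ≤ R + 1 / R ∧
      (y1 ≠ (starRingEnd ℂ) y2 * q → X < R + 1 / R) := by
  set a := ‖lam0‖ with ha'
  set D := ‖y1 * y2 - (C : ℂ) ^ 2 * q‖ with hD'
  set E := ‖y1 - (starRingEnd ℂ) y2 * q‖ with hE'
  have ha : 0 < a := norm_pos_iff.mpr hlam0
  have hD : 0 < D := norm_pos_iff.mpr (sub_ne_zero.mpr hq)
  have hS : 0 < C ^ 2 - ‖y2‖ ^ 2 := by
    have h0 : (0:ℝ) ≤ ‖y2‖ := norm_nonneg y2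
    nlinarith
  have key : D ^ 2 + (C ^ 2 - ‖y2‖ ^ 2) *
      (‖y1‖ ^ 2 - C ^ 2 * ‖q‖ ^ 2) = C ^ 2 * E ^ 2 := by
    have h2 : ((C:ℂ)) ^ 2 = ((C ^ 2 : ℝ) : ℂ) := by push_cast; ring
    rw [hD', hE', h2]
    simp only [Complex.sq_norm, Complex.normSq_apply, Complex.sub_re, Complex.sub_im,
      Complex.mul_re, Complex.mul_im, Complex.ofReal_re, Complex.ofReal_im,
      Complex.conj_re, Complex.conj_im]
    ring
  have main : R + 1 / R - X = C ^ 2 * E ^ 2 / (a * (C ^ 2 - ‖y2‖ ^ 2) * D) := by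
    rw [← key, hR, hX]
    field_simp
    ring
  refine ⟨main, ?_, ?_⟩
  · have hnn : 0 ≤ C ^ 2 * E ^ 2 / (a * (C ^ 2 - ‖y2‖ ^ 2) * D) := by
      positivity
    linarith [main]
  · intro hne
    have hE : 0 < E := norm_pos_iff.mpr (by
      intro h
      exact hne (sub_eq_zero.mp h))
    have hpos : 0 < C ^ 2 * E ^ 2 / (a * (C ^ 2 - ‖y2‖ ^ 2) * D) := by
      positivity
    linarith [main]
end

section
/- Let C > 0, λ₀ ∈ ℂ with 0 < |λ₀| < 1, and y₁, y₂, q ∈ ℂ with y₁y₂ ≠ C²q, |y₂| ≤ |y₁|, and (C|y₁ - ȳ₂q| + |y₁y₂ - C²q|)/(C² - |y₂|²) < |λ₀| (where also |y₂| < C). Then C² - |y₁|²/|λ₀|² - |y₂|² + C²|q|²/|λ₀|² > 2|y₁y₂ - C²q|/|λ₀|. -/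
open Complex

lemma stmt4_key (C : ℝ) (y1 y2 q : ℂ) :
    C^2 * Complex.normSq (y1 - (starRingEnd ℂ) y2 * q) - Complex.normSq (y1 * y2 - (C:ℂ)^2 * q)
    = (C^2 - Complex.normSq y2) * (Complex.normSq y1 - C^2 * Complex.normSq q) := by
  simp only [Complex.normSq_apply, Complex.sub_re, Complex.sub_im, Complex.mul_re, Complex.mul_im,
    Complex.conj_re, Complex.conj_im, Complex.ofReal_re, Complex.ofReal_im, pow_two,
    Complex.ofReal_pow]
  ring

/-- if `0 < |λ₀| < 1`, `y₁y₂ ≠ C²q`, `|y₂| ≤ |y₁|`, `|y₂| < C` and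
`(C|y₁ - ȳ₂q| + |y₁y₂ - C²q|)/(C² - |y₂|²) < |λ₀|`, then
`C² - |y₁|²/|λ₀|² - |y₂|² + C²|q|²/|λ₀|² > 2|y₁y₂ - C²q|/|λ₀|`. -/
theorem stmt4 (C : ℝ) (hC : 0 < C) (lam0 y1 y2 q : ℂ)
    (hlam0 : 0 < ‖lam0‖) (hlam1 : ‖lam0‖ < 1)
    (hq : y1 * y2 ≠ (C : ℂ) ^ 2 * q)
    (hy : ‖y2‖ ≤ ‖y1‖) (hy2 : ‖y2‖ < C)
    (hPhi : (C * ‖y1 - (starRingEnd ℂ) y2 * q‖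
        + ‖y1 * y2 - (C : ℂ) ^ 2 * q‖) / (C ^ 2 - ‖y2‖ ^ 2)
        < ‖lam0‖) :
    2 * ‖y1 * y2 - (C : ℂ) ^ 2 * q‖ / ‖lam0‖ <
      C ^ 2 - ‖y1‖ ^ 2 / ‖lam0‖ ^ 2 - ‖y2‖ ^ 2
        + C ^ 2 * ‖q‖ ^ 2 / ‖lam0‖ ^ 2 := by
  set L := ‖lam0‖ with hLdef
  set A := ‖y1 - (starRingEnd ℂ) y2 * q‖ with hAdef
  set B := ‖y1 * y2 - (C : ℂ) ^ 2 * q‖ with hBdef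
  set a := ‖y1‖ with hadef
  set b := ‖y2‖ with hbdef
  set c := ‖q‖ with hcdef
  have hD : (0:ℝ) < C^2 - b^2 := by nlinarith [norm_nonneg y2]
  have hA0 : 0 ≤ A := norm_nonneg _
  have hB0 : 0 ≤ B := norm_nonneg _
  have hyp : C * A + B < L * (C^2 - b^2) := by
    rw [div_lt_iff₀ hD] at hPhi; linarith
  have key : C^2 * A^2 - B^2 = (C^2 - b^2) * (a^2 - C^2 * c^2) := by
    have h := stmt4_key C y1 y2 q
    rw [← Complex.sq_norm, ← Complex.sq_norm, ← Complex.sq_norm, ← Complex.sq_norm,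
      ← Complex.sq_norm] at h
    exact h
  have hCA : 0 ≤ C * A := mul_nonneg hC.le hA0
  have h1 : 0 < L * (C^2 - b^2) - B - C * A := by linarith
  have h2 : 0 < L * (C^2 - b^2) - B + C * A := by linarith
  have hprod : 0 < (L * (C^2 - b^2) - B - C * A) * (L * (C^2 - b^2) - B + C * A) :=
    mul_pos h1 h2
  have final : 2 * B * L < (C^2 - b^2) * L^2 - (a^2 - C^2 * c^2) := by
    nlinarith [hprod, key, hD]
  have hL2 : (0:ℝ) < L^2 := by positivity
  have e1 : 2 * B / L = (2 * B * L) / L^2 := by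
    field_simp
  have e2 : C ^ 2 - a ^ 2 / L ^ 2 - b ^ 2 + C ^ 2 * c ^ 2 / L ^ 2
      = ((C^2 - b^2) * L^2 - (a^2 - C^2 * c^2)) / L^2 := by
    field_simp; ring
  rw [e1, e2]
  exact (div_lt_div_iff_of_pos_right hL2).mpr final
end

section
/- Let E be the space of 2×2 diagonal complex matrices, and for B ∈ ℂ^{2×2} define μ_E(B) = 1 / inf{‖X‖ : X ∈ E, I - BX singular} (with μ_E(B) = 0 if I - BX is invertible for all X ∈ E). Then for r > 0, μ_E(B) ≤ 1/r if and only if 1 - z·B₁₁ - w·B₂₂ + zw·det B ≠ 0 for all z, w in the open disc of radius r centered at 0. -/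
open Matrix

lemma detcalc (B : Matrix (Fin 2) (Fin 2) ℂ) (z w : ℂ) :
    (1 - B * !![z, 0; 0, w]).det = 1 - z * B 0 0 - w * B 1 1 + z * w * B.det := by
  simp [Matrix.det_fin_two, Matrix.mul_apply, Fin.sum_univ_two, Matrix.one_apply]
  ring


/-- The structured singular value `μ_E(B)` relative to the space `E` of 2×2 diagonal
matrices: `μ_E(B) = 1 / inf{‖X‖ : X ∈ E, I - BX singular}`, with the convention that
`μ_E(B) = 0` when `I - BX` is invertible for every diagonal `X`
(the norm of `diag(z,w)` being `max(|z|,|w|)`). -/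
noncomputable def muE (B : Matrix (Fin 2) (Fin 2) ℂ) : ℝ :=
  (sInf {t : ℝ | ∃ z w : ℂ, t = max ‖z‖ ‖w‖ ∧
      (1 - B * !![z, 0; 0, w]).det = 0})⁻¹

/-- for `r > 0`, `μ_E(B) ≤ 1/r` iff
`1 - z·B₁₁ - w·B₂₂ + zw·det B ≠ 0` for all `z, w` with `|z| < r`, `|w| < r`. -/
theorem stmt10 (B : Matrix (Fin 2) (Fin 2) ℂ) (r : ℝ) (hr : 0 < r) :
    muE B ≤ 1 / r ↔
      ∀ z w : ℂ, ‖z‖ < r → ‖w‖ < r →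
        1 - z * B 0 0 - w * B 1 1 + z * w * B.det ≠ 0 := by
  set S : Set ℝ := {t : ℝ | ∃ z w : ℂ, t = max (‖z‖) (‖w‖) ∧
      (1 - B * !![z, 0; 0, w]).det = 0} with hS
  set a : ℝ := ‖B 0 0‖ with ha
  set b : ℝ := ‖B 1 1‖ with hb
  set c : ℝ := ‖B.det‖ with hc
  have ha0 : 0 ≤ a := norm_nonneg _
  have hb0 : 0 ≤ b := norm_nonneg _
  have hc0 : 0 ≤ c := norm_nonneg _
  set M : ℝ := a + b + c with hM
  -- key inequality for members of S
  have hkey : ∀ t ∈ S, 0 ≤ t ∧ 1 ≤ t * a + t * b + t * t * c := by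
    rintro t ⟨z, w, rfl, hdet⟩
    rw [detcalc] at hdet
    set t := max (‖z‖) (‖w‖) with ht
    have ht0 : 0 ≤ t := le_trans (norm_nonneg z) (le_max_left _ _)
    have hz : ‖z‖ ≤ t := le_max_left _ _
    have hw : ‖w‖ ≤ t := le_max_right _ _
    refine ⟨ht0, ?_⟩
    have h1 : (1 : ℂ) = z * B 0 0 + w * B 1 1 + -(z * w * B.det) := by
      linear_combination hdet
    have h2 : (1:ℝ) ≤ ‖z * B 0 0‖ + ‖w * B 1 1‖
        + ‖z * w * B.det‖ := by
      calc (1:ℝ) = ‖z * B 0 0 + w * B 1 1 + -(z * w * B.det)‖ := by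
            rw [← h1]; simp
        _ ≤ ‖z * B 0 0 + w * B 1 1‖ + ‖-(z * w * B.det)‖ :=
            norm_add_le _ _
        _ ≤ ‖z * B 0 0‖ + ‖w * B 1 1‖
            + ‖-(z * w * B.det)‖ := by
            gcongr; exact norm_add_le _ _
        _ = _ := by rw [norm_neg]
    have e1 : ‖z * B 0 0‖ ≤ t * a := by
      rw [norm_mul]; exact mul_le_mul_of_nonneg_right hz ha0
    have e2 : ‖w * B 1 1‖ ≤ t * b := by
      rw [norm_mul]; exact mul_le_mul_of_nonneg_right hw hb0
    have e3 : ‖z * w * B.det‖ ≤ t * t * c := by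
      rw [norm_mul, norm_mul]
      have : ‖z‖ * ‖w‖ ≤ t * t := by
        exact mul_le_mul hz hw (norm_nonneg _) ht0
      exact mul_le_mul_of_nonneg_right this hc0
    linarith
  have hMpos : S.Nonempty → 0 < M := by
    rintro ⟨t, htS⟩
    obtain ⟨ht0, hkt⟩ := hkey t htS
    nlinarith
  have hlb : ∀ t ∈ S, min 1 M⁻¹ ≤ t := by
    intro t htS
    obtain ⟨ht0, hkt⟩ := hkey t htS
    have hMp : 0 < M := hMpos ⟨t, htS⟩
    by_contra hlt
    push_neg at hlt
    have ht1 : t < 1 := lt_of_lt_of_le hlt (min_le_left _ _)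
    have htM : t < M⁻¹ := lt_of_lt_of_le hlt (min_le_right _ _)
    have h2 : t * M < 1 := by
      calc t * M < M⁻¹ * M := mul_lt_mul_of_pos_right htM hMp
        _ = 1 := inv_mul_cancel₀ (ne_of_gt hMp)
    have h3 : t * t * c ≤ t * c := by
      have h5 := mul_le_mul_of_nonneg_right (le_of_lt ht1) (mul_nonneg ht0 hc0)
      linarith [h5]
    have h4 : t * M = t * a + t * b + t * c := by rw [hM]; ring
    linarith
  constructor
  · intro hle z w hzr hwr hzero
    have htS : max (‖z‖) (‖w‖) ∈ S :=
      ⟨z, w, rfl, by rw [detcalc]; exact hzero⟩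
    have hbdd : BddBelow S := ⟨min 1 M⁻¹, hlb⟩
    have hmin_pos : 0 < min 1 M⁻¹ := by
      have := hMpos ⟨_, htS⟩
      simp [this, inv_pos]
    have hinf_pos : 0 < sInf S := lt_of_lt_of_le hmin_pos (le_csInf ⟨_, htS⟩ hlb)
    have hinf_lt : sInf S < r := lt_of_le_of_lt (csInf_le hbdd htS) (max_lt hzr hwr)
    have hgt : 1 / r < (sInf S)⁻¹ := by
      rw [one_div]
      exact inv_strictAnti₀ hinf_pos hinf_lt
    have : muE B = (sInf S)⁻¹ := by rw [muE, hS]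
    rw [this] at hle
    linarith
  · intro h
    have hrlb : ∀ t ∈ S, r ≤ t := by
      rintro t ⟨z, w, rfl, hdet⟩
      by_contra hlt
      push_neg at hlt
      exact h z w (lt_of_le_of_lt (le_max_left _ _) hlt)
        (lt_of_le_of_lt (le_max_right _ _) hlt) (by rw [← detcalc]; exact hdet)
    have hmu : muE B = (sInf S)⁻¹ := by rw [muE, hS]
    rw [hmu]
    rcases Set.eq_empty_or_nonempty S with hE | hNE
    · rw [hE, Real.sInf_empty, _root_.inv_zero]
      positivity
    · have hrle : r ≤ sInf S := le_csInf hNE hrlb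
      rw [one_div]
      exact inv_anti₀ hr hrle
end

section
/- Every analytic map φ = (φ₁,…,φₙ) : 𝔻 → G̃ₙ lifts to analytic matrix-valued functions: for each 1 ≤ j ≤ ⌊n/2⌋, the function F_j(λ) = [[φ_j(λ), φ_j(λ)φ_{n-j}(λ) - φₙ(λ)],[1, φ_{n-j}(λ)]] is analytic on 𝔻, satisfies det F_j = φ_j φ_{n-j} - (φ_j φ_{n-j} - φₙ) = φₙ, and μ_E(F_j(λ)) < 1 for all λ ∈ 𝔻 (after rescaling entries by binomial coefficients as appropriate). -/
open Matrix

/-- The extended symmetrized polydisc `G̃ₙ ⊂ ℂⁿ`, a point being recorded as the pair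
`(y, q)` with `y : Fin (n-1) → ℂ` listing `y₁, …, y_{n-1}` (index `j` holds `y_{j+1}`)
and `q` the last coordinate; `y_{n-j}` corresponds to `y j.rev`. -/
def Gtilde (n : ℕ) : Set ((Fin (n - 1) → ℂ) × ℂ) :=
  {p | ‖p.2‖ < 1 ∧ ∃ β : Fin (n - 1) → ℂ, ∀ j : Fin (n - 1),
      p.1 j = β j + (starRingEnd ℂ) (β j.rev) * p.2 ∧
      ‖β j‖ + ‖β j.rev‖ < (n.choose (j.val + 1) : ℝ)}

section auxStmt13
open Complex

private lemma Ekey (C b c s t : ℝ) (hb : 0 ≤ b) (hc : 0 ≤ c) (hbc : b + c ≤ C)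
    (hs0 : 0 ≤ s) (hs : s ≤ 1) (ht0 : 0 ≤ t) (ht : t ≤ 1) :
    0 ≤ C^2*(1-s^2*t^2) + b^2*(s^2-t^2) + c^2*(t^2-s^2) - 2*C*b*s*(1-t^2) - 2*C*c*t*(1-s^2) := by
  have hK1 : (0:ℝ) ≤ C^2 - b^2 + c^2 := by nlinarith
  have hK2 : (0:ℝ) ≤ C^2 + b^2 - c^2 := by nlinarith
  have hcb : (0:ℝ) ≤ (C-c)^2 - b^2 := by nlinarith
  have hbc' : (0:ℝ) ≤ (C-b)^2 - c^2 := by nlinarith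
  have br1 : 0 ≤ (C^2-b^2+c^2)*(1+t^2) - 4*C*c*t := by
    nlinarith [mul_nonneg hK1 (sq_nonneg (1-t)), mul_nonneg ht0 hcb]
  have br2 : 0 ≤ (C^2+b^2-c^2)*(1+s^2) - 4*C*b*s := by
    nlinarith [mul_nonneg hK2 (sq_nonneg (1-s)), mul_nonneg hs0 hbc']
  have h1 : 0 ≤ (1-s^2) * ((C^2-b^2+c^2)*(1+t^2) - 4*C*c*t) :=
    mul_nonneg (by nlinarith) br1
  have h2 : 0 ≤ (1-t^2) * ((C^2+b^2-c^2)*(1+s^2) - 4*C*b*s) :=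
    mul_nonneg (by nlinarith) br2
  nlinarith [h1, h2]

lemma ABident (C : ℝ) (β γ a b : ℂ) :
    normSq ((C:ℂ) - β*a - γ*b) - normSq ((C:ℂ)*a*b - (starRingEnd ℂ) γ * a - (starRingEnd ℂ) β * b)
    = C^2*(1 - normSq a * normSq b)
      + normSq β * (normSq a - normSq b)
      + normSq γ * (normSq b - normSq a)
      - 2*(C*(β*a).re)*(1 - normSq b)
      - 2*(C*(γ*b).re)*(1 - normSq a) := by
  simp only [normSq_apply, mul_re, mul_im, sub_re, sub_im, ofReal_re, ofReal_im,
    conj_re, conj_im]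
  ring

lemma BleA (C : ℝ) (β γ a b : ℂ) (hbc : ‖β‖ + ‖γ‖ ≤ C)
    (ha : ‖a‖ ≤ 1) (hb : ‖b‖ ≤ 1) :
    ‖(C:ℂ)*a*b - (starRingEnd ℂ) γ * a - (starRingEnd ℂ) β * b‖ ≤ ‖(C:ℂ) - β*a - γ*b‖ := by
  have hC0 : (0:ℝ) ≤ C := le_trans (by positivity) hbc
  have h1 : (β*a).re ≤ ‖β‖ * ‖a‖ := by
    calc (β*a).re ≤ ‖β*a‖ := Complex.re_le_norm _
    _ = ‖β‖ * ‖a‖ := norm_mul _ _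
  have h2 : (γ*b).re ≤ ‖γ‖ * ‖b‖ := by
    calc (γ*b).re ≤ ‖γ*b‖ := Complex.re_le_norm _
    _ = ‖γ‖ * ‖b‖ := norm_mul _ _
  have hE := Ekey C (‖β‖) (‖γ‖) (‖a‖) (‖b‖) (by positivity) (by positivity) hbc
    (by positivity) ha (by positivity) hb
  have key : normSq ((C:ℂ)*a*b - (starRingEnd ℂ) γ * a - (starRingEnd ℂ) β * b)
      ≤ normSq ((C:ℂ) - β*a - γ*b) := by
    have hid := ABident C β γ a b
    have hna : normSq a = (‖a‖)^2 := (Complex.sq_norm a).symm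
    have hnb : normSq b = (‖b‖)^2 := (Complex.sq_norm b).symm
    have hnβ : normSq β = (‖β‖)^2 := (Complex.sq_norm β).symm
    have hnγ : normSq γ = (‖γ‖)^2 := (Complex.sq_norm γ).symm
    have hya : (0:ℝ) ≤ 1 - normSq b := by rw [hnb]; nlinarith [norm_nonneg b]
    have hxa : (0:ℝ) ≤ 1 - normSq a := by rw [hna]; nlinarith [norm_nonneg a]
    simp only [hna, hnb, hnβ, hnγ] at hid hya hxa
    nlinarith [mul_nonneg (mul_nonneg hC0 (sub_nonneg.2 h1)) hya,
      mul_nonneg (mul_nonneg hC0 (sub_nonneg.2 h2)) hxa, hE, hid]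
  rw [Complex.norm_def, Complex.norm_def]
  exact Real.sqrt_le_sqrt key

private lemma pLower(C : ℝ) (β γ q a b : ℂ) (hbc : ‖β‖ + ‖γ‖ ≤ C)
    (hq : ‖q‖ ≤ 1) (ha : ‖a‖ ≤ 1) (hb : ‖b‖ ≤ 1) :
    (1 - ‖q‖) * (C - ‖β‖ - ‖γ‖) ≤
      ‖(C:ℂ) - (β + (starRingEnd ℂ) γ * q)*a - (γ + (starRingEnd ℂ) β * q)*b + C*q*a*b‖ := by
  have hBA := BleA C β γ a b hbc ha hb
  have hC0 : (0:ℝ) ≤ C := le_trans (by positivity) hbc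
  set A : ℂ := (C:ℂ) - β*a - γ*b with hA
  set B : ℂ := (C:ℂ)*a*b - (starRingEnd ℂ) γ * a - (starRingEnd ℂ) β * b with hB
  have hpAB : (C:ℂ) - (β + (starRingEnd ℂ) γ * q)*a - (γ + (starRingEnd ℂ) β * q)*b + C*q*a*b
      = A + q * B := by rw [hA, hB]; ring
  rw [hpAB]
  have hAlow : C - ‖β‖ - ‖γ‖ ≤ ‖A‖ := by
    have h1 : ‖(C:ℂ)‖ - ‖β*a + γ*b‖ ≤ ‖(C:ℂ) - (β*a + γ*b)‖ := norm_sub_norm_le _ _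
    have h2 : ‖β*a + γ*b‖ ≤ ‖β‖*‖a‖ + ‖γ‖*‖b‖ := by
      calc ‖β*a + γ*b‖ ≤ ‖β*a‖ + ‖γ*b‖ := norm_add_le _ _
        _ = ‖β‖*‖a‖ + ‖γ‖*‖b‖ := by rw [norm_mul, norm_mul]
    have h3 : ‖β‖*‖a‖ ≤ ‖β‖ := by nlinarith [norm_nonneg β, norm_nonneg a]
    have h4 : ‖γ‖*‖b‖ ≤ ‖γ‖ := by nlinarith [norm_nonneg γ, norm_nonneg b]
    have h5 : ‖(C:ℂ)‖ = C := by rw [Complex.norm_real, Real.norm_of_nonneg hC0]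
    have h6 : A = (C:ℂ) - (β*a + γ*b) := by rw [hA]; ring
    rw [h6]; linarith
  calc (1 - ‖q‖) * (C - ‖β‖ - ‖γ‖) ≤ (1 - ‖q‖) * ‖A‖ :=
        mul_le_mul_of_nonneg_left hAlow (by linarith)
    _ = ‖A‖ - ‖q‖ * ‖A‖ := by ring
    _ ≤ ‖A‖ - ‖q‖ * ‖B‖ := by nlinarith [norm_nonneg q]
    _ = ‖A‖ - ‖q * B‖ := by rw [norm_mul]
    _ ≤ ‖A + q * B‖ := by
        have h := norm_sub_le (A + q*B) (q*B)
        have h2 : A + q*B - q*B = A := by ring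
        rw [h2] at h
        linarith

set_option maxHeartbeats 1000000 in
private lemma pNe(C : ℝ) (hC : 1 ≤ C) (β γ q : ℂ) (hq : ‖q‖ < 1) (hβγ : ‖β‖ + ‖γ‖ < C) :
    ∃ ε > 0, ∀ a b : ℂ, ‖a‖ ≤ 1+ε → ‖b‖ ≤ 1+ε →
      (C:ℂ) - (β + (starRingEnd ℂ) γ * q)*a - (γ + (starRingEnd ℂ) β * q)*b + C*q*a*b ≠ 0 := by
  have hC0 : (0:ℝ) < C := by linarith
  set δ : ℝ := C - ‖β‖ - ‖γ‖ with hδdef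
  have hδ : 0 < δ := by simp only [hδdef]; linarith
  set κ : ℝ := 1 - ‖q‖ with hκdef
  have hκ : 0 < κ := by simp only [hκdef]; linarith
  set ε : ℝ := min 1 (κ*δ/(10*C)) with hεdef
  have hε : 0 < ε := lt_min one_pos (by positivity)
  have hε1 : ε ≤ 1 := min_le_left _ _
  have hε2 : ε ≤ κ*δ/(10*C) := min_le_right _ _
  refine ⟨ε, hε, fun a b ha hb => ?_⟩
  set r : ℝ := 1 + ε with hrdef
  have hr1 : 1 ≤ r := by simp only [hrdef]; linarith
  have hr0 : (0:ℝ) < r := by linarith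
  have hrr : (0:ℝ) ≤ (r-1)/r := div_nonneg (by linarith) hr0.le
  have hrr2 : (0:ℝ) ≤ (r^2-1)/r^2 := div_nonneg (by nlinarith) (by positivity)
  have hrne : (r:ℂ) ≠ 0 := by
    simp only [ne_eq, Complex.ofReal_eq_zero]; linarith
  set a' : ℂ := a / (r:ℂ) with ha'def
  set b' : ℂ := b / (r:ℂ) with hb'def
  have ha' : ‖a'‖ ≤ 1 := by
    rw [ha'def, norm_div, Complex.norm_real, Real.norm_of_nonneg hr0.le, div_le_one hr0]
    exact ha
  have hb' : ‖b'‖ ≤ 1 := by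
    rw [hb'def, norm_div, Complex.norm_real, Real.norm_of_nonneg hr0.le, div_le_one hr0]
    exact hb
  have hlow := pLower C β γ q a' b' hβγ.le hq.le ha' hb'
  set y1 : ℂ := β + (starRingEnd ℂ) γ * q with hy1def
  set y2 : ℂ := γ + (starRingEnd ℂ) β * q with hy2def
  have hy1 : ‖y1‖ ≤ C := by
    calc ‖y1‖ ≤ ‖β‖ + ‖(starRingEnd ℂ) γ * q‖ := norm_add_le _ _
      _ = ‖β‖ + ‖γ‖ * ‖q‖ := by rw [norm_mul, Complex.norm_conj]
      _ ≤ ‖β‖ + ‖γ‖ := by nlinarith [norm_nonneg γ, norm_nonneg q]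
      _ ≤ C := hβγ.le
  have hy2 : ‖y2‖ ≤ C := by
    calc ‖y2‖ ≤ ‖γ‖ + ‖(starRingEnd ℂ) β * q‖ := norm_add_le _ _
      _ = ‖γ‖ + ‖β‖ * ‖q‖ := by rw [norm_mul, Complex.norm_conj]
      _ ≤ ‖γ‖ + ‖β‖ := by nlinarith [norm_nonneg β, norm_nonneg q]
      _ ≤ C := by linarith [hβγ.le]
  have haa' : ‖a - a'‖ ≤ ε := by
    have h1 : a - a' = a * (((r-1)/r : ℝ) : ℂ) := by
      rw [ha'def]; push_cast; field_simp
    rw [h1, norm_mul, Complex.norm_real, Real.norm_of_nonneg hrr]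
    calc ‖a‖ * ((r-1)/r) ≤ r * ((r-1)/r) := by
          apply mul_le_mul_of_nonneg_right ha hrr
      _ = r - 1 := by field_simp
      _ = ε := by simp [hrdef]
  have hbb' : ‖b - b'‖ ≤ ε := by
    have h1 : b - b' = b * (((r-1)/r : ℝ) : ℂ) := by
      rw [hb'def]; push_cast; field_simp
    rw [h1, norm_mul, Complex.norm_real, Real.norm_of_nonneg hrr]
    calc ‖b‖ * ((r-1)/r) ≤ r * ((r-1)/r) := by
          apply mul_le_mul_of_nonneg_right hb hrr
      _ = r - 1 := by field_simp
      _ = ε := by simp [hrdef]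
  have habab : ‖a*b - a'*b'‖ ≤ 3*ε := by
    have h1 : a*b - a'*b' = a * b * (((r^2-1)/r^2 : ℝ) : ℂ) := by
      rw [ha'def, hb'def]; push_cast; field_simp
    rw [h1, norm_mul, Complex.norm_real, Real.norm_of_nonneg hrr2]
    have hab : ‖a*b‖ ≤ r^2 := by
      rw [norm_mul]
      nlinarith [norm_nonneg a, norm_nonneg b]
    calc ‖a*b‖ * ((r^2-1)/r^2) ≤ r^2 * ((r^2-1)/r^2) := by
          apply mul_le_mul_of_nonneg_right hab hrr2
      _ = r^2 - 1 := by field_simp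
      _ = 2*ε + ε^2 := by simp only [hrdef]; ring
      _ ≤ 3*ε := by nlinarith
  set Δ : ℂ := -(y1*(a-a')) - y2*(b-b') + C*q*(a*b-a'*b') with hΔdef
  set P : ℂ := (C:ℂ) - y1*a - y2*b + C*q*a*b with hPdef
  set P' : ℂ := (C:ℂ) - y1*a' - y2*b' + C*q*a'*b' with hP'def
  have hsplit : P = P' + Δ := by rw [hPdef, hP'def, hΔdef]; ring
  have hΔ : ‖Δ‖ ≤ 5*C*ε := by
    have step1 : ‖Δ‖ ≤ ‖-(y1*(a-a')) - y2*(b-b')‖ + ‖(C:ℂ)*q*(a*b-a'*b')‖ :=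
      norm_add_le _ _
    have step2 : ‖-(y1*(a-a')) - y2*(b-b')‖ ≤ ‖y1*(a-a')‖ + ‖y2*(b-b')‖ := by
      calc ‖-(y1*(a-a')) - y2*(b-b')‖ ≤ ‖-(y1*(a-a'))‖ + ‖-(y2*(b-b'))‖ := by
            have := norm_add_le (-(y1*(a-a'))) (-(y2*(b-b')))
            simpa [sub_eq_add_neg] using this
        _ = ‖y1*(a-a')‖ + ‖y2*(b-b')‖ := by rw [norm_neg, norm_neg]
    have hCa : ‖(C:ℂ)‖ = C := by
      rw [Complex.norm_real, Real.norm_of_nonneg hC0.le]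
    have t1 : ‖y1*(a-a')‖ ≤ C*ε := by
      rw [norm_mul]; exact mul_le_mul hy1 haa' (norm_nonneg _) hC0.le
    have t2 : ‖y2*(b-b')‖ ≤ C*ε := by
      rw [norm_mul]; exact mul_le_mul hy2 hbb' (norm_nonneg _) hC0.le
    have t3 : ‖(C:ℂ)*q*(a*b-a'*b')‖ ≤ C*(3*ε) := by
      rw [norm_mul, norm_mul, hCa]
      calc C * ‖q‖ * ‖a*b-a'*b'‖ ≤ C * 1 * (3*ε) := by
            apply mul_le_mul (by nlinarith [norm_nonneg q]) habab
              (norm_nonneg _) (by linarith)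
        _ = C*(3*ε) := by ring
    linarith
  have h5 : 5*C*ε ≤ κ*δ/2 := by
    calc 5*C*ε ≤ 5*C*(κ*δ/(10*C)) := by
          apply mul_le_mul_of_nonneg_left hε2 (by positivity)
      _ = κ*δ/2 := by field_simp; ring
  have hlow' : κ * δ ≤ ‖P'‖ := hlow
  have hPpos : 0 < ‖P‖ := by
    have h8 : ‖P'‖ ≤ ‖P‖ + ‖Δ‖ := by
      have h9 := norm_sub_le P Δ
      have h10 : P - Δ = P' := by rw [hsplit]; ring
      rw [h10] at h9
      simpa using h9
    have hκδ : 0 < κ*δ/2 := by positivity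
    nlinarith
  intro hzero
  rw [hzero, norm_zero] at hPpos
  exact lt_irrefl 0 hPpos

end auxStmt13

set_option maxHeartbeats 1000000 in
/-- any analytic `φ : 𝔻 → G̃ₙ` lifts: with entries rescaled by the
binomial coefficient `C = C(n,j)`, the matrix function
`F_j = [[φ_j/C, φ_jφ_{n-j}/C² - φₙ],[1, φ_{n-j}/C]]` is analytic on `𝔻`,
`det F_j = φₙ`, and `μ_E(F_j(λ)) < 1` for all `λ ∈ 𝔻`. -/
theorem stmt13 (n : ℕ) (hn : 2 ≤ n) (φ : ℂ → (Fin (n - 1) → ℂ) × ℂ)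
    (hφ : DifferentiableOn ℂ φ (Metric.ball 0 1))
    (hφval : ∀ z ∈ Metric.ball (0 : ℂ) 1, φ z ∈ Gtilde n)
    (j : Fin (n - 1)) (hj : j.val + 1 ≤ n / 2)
    (F : ℂ → Matrix (Fin 2) (Fin 2) ℂ)
    (hF : ∀ z, F z =
      !![(φ z).1 j / (n.choose (j.val + 1) : ℂ),
          (φ z).1 j * (φ z).1 j.rev / (n.choose (j.val + 1) : ℂ) ^ 2 - (φ z).2;
        1, (φ z).1 j.rev / (n.choose (j.val + 1) : ℂ)]) :
    (∀ i k : Fin 2, DifferentiableOn ℂ (fun z => F z i k) (Metric.ball 0 1)) ∧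
      (∀ z ∈ Metric.ball (0 : ℂ) 1, (F z).det = (φ z).2) ∧
      (∀ z ∈ Metric.ball (0 : ℂ) 1, muE (F z) < 1) := by
  have hjn : j.val + 1 ≤ n := by have := j.isLt; omega
  have hCpos : 0 < n.choose (j.val + 1) := Nat.choose_pos hjn
  have hCne : ((n.choose (j.val + 1) : ℂ)) ≠ 0 := by
    exact_mod_cast Nat.cast_ne_zero.mpr hCpos.ne'
  have hy1d : DifferentiableOn ℂ (fun z => (φ z).1 j) (Metric.ball 0 1) :=
    fun x hx => ((differentiableWithinAt_pi.mp (hφ x hx).fst) j)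
  have hy2d : DifferentiableOn ℂ (fun z => (φ z).1 j.rev) (Metric.ball 0 1) :=
    fun x hx => ((differentiableWithinAt_pi.mp (hφ x hx).fst) j.rev)
  have hqd : DifferentiableOn ℂ (fun z => (φ z).2) (Metric.ball 0 1) :=
    fun x hx => (hφ x hx).snd
  refine ⟨?_, ?_, ?_⟩
  · intro i k
    fin_cases i <;> fin_cases k <;>
      simp only [hF, Matrix.cons_val', Matrix.cons_val_zero, Matrix.cons_val_one,
        Matrix.head_cons, Matrix.head_fin_const, Matrix.empty_val',
        Matrix.cons_val_fin_one, Matrix.of_apply, Fin.isValue]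
    · exact hy1d.div_const _
    · exact ((hy1d.mul hy2d).div_const _).sub hqd
    · exact differentiableOn_const 1
    · exact hy2d.div_const _
  · intro z hz
    rw [hF z, Matrix.det_fin_two_of]
    field_simp
    ring
  · intro z hz
    obtain ⟨hq, β, hβ⟩ := hφval z hz
    obtain ⟨h1, hbd⟩ := hβ j
    obtain ⟨h2, -⟩ := hβ j.rev
    rw [Fin.rev_rev] at h2
    have hC1 : (1:ℝ) ≤ (n.choose (j.val + 1) : ℝ) := by exact_mod_cast hCpos
    obtain ⟨ε, hε, hne⟩ := pNe (n.choose (j.val + 1) : ℝ) hC1 (β j) (β j.rev) (φ z).2 hq hbd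
    have hmu : muE (F z) = (sInf {t : ℝ | ∃ x w : ℂ,
        t = max (‖x‖) (‖w‖) ∧
        (1 - F z * !![x, 0; 0, w]).det = 0})⁻¹ := rfl
    rw [hmu]
    set S := {t : ℝ | ∃ x w : ℂ, t = max (‖x‖) (‖w‖) ∧
        (1 - F z * !![x, 0; 0, w]).det = 0} with hSdef
    have hSb : ∀ t ∈ S, 1 + ε ≤ t := by
      rintro t ⟨x, w, rfl, hdet⟩
      by_contra hlt
      push_neg at hlt
      have hx : ‖x‖ ≤ 1 + ε := ((le_max_left _ _).trans_lt hlt).le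
      have hw : ‖w‖ ≤ 1 + ε := ((le_max_right _ _).trans_lt hlt).le
      apply hne x w hx hw
      have key : (1 - F z * !![x, 0; 0, w]).det * (n.choose (j.val + 1) : ℂ)
          = ((n.choose (j.val + 1) : ℝ) : ℂ) - (φ z).1 j * x - (φ z).1 j.rev * w
            + ((n.choose (j.val + 1) : ℝ) : ℂ) * (φ z).2 * x * w := by
        rw [hF z]
        simp only [Matrix.det_fin_two, Matrix.sub_apply, Matrix.mul_apply,
          Fin.sum_univ_succ, Fin.sum_univ_zero, Matrix.one_apply, Matrix.cons_val',
          Matrix.cons_val_zero, Matrix.cons_val_one, Matrix.head_cons,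
          Matrix.head_fin_const, Matrix.empty_val', Matrix.cons_val_fin_one,
          Matrix.of_apply, Fin.isValue]
        push_cast
        field_simp
        ring
      rw [hdet, zero_mul] at key
      rw [h1, h2] at key
      exact key.symm
    rcases Set.eq_empty_or_nonempty S with hS | hS
    · rw [hS, Real.sInf_empty, _root_.inv_zero]; exact one_pos
    · have h1' : 1 + ε ≤ sInf S := le_csInf hS hSb
      have h2' : 1 < sInf S := by linarith
      exact inv_lt_one_of_one_lt₀ h2'
end

section
/- For ω in the closed unit disc and y = (y₁,…,y_{n-1},q) with |y_{n-j}| < C(n,j) and y_jy_{n-j} ≠ C(n,j)²q, the supremum over |ω| ≤ 1 of |(C(n,j)qω - y_j)/(y_{n-j}ω - C(n,j))| equals (C(n,j)|y_j - ȳ_{n-j}q| + |y_jy_{n-j} - C(n,j)²q|)/(C(n,j)² - |y_{n-j}|²). -/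
open Complex

/-- for `|y₂| < C` and `y₁y₂ ≠ C²q`, the supremum over the closed unit
disc of `|(Cqω - y₁)/(y₂ω - C)|` equals
`(C|y₁ - ȳ₂q| + |y₁y₂ - C²q|)/(C² - |y₂|²)`. -/
theorem stmt15 (C : ℝ) (hC : 0 < C) (y1 y2 q : ℂ)
    (hy2 : ‖y2‖ < C) (hq : y1 * y2 ≠ (C : ℂ) ^ 2 * q) :
    sSup {t : ℝ | ∃ ω : ℂ, ‖ω‖ ≤ 1 ∧
        t = ‖((C : ℂ) * q * ω - y1) / (y2 * ω - (C : ℂ))‖} =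
      (C * ‖y1 - (starRingEnd ℂ) y2 * q‖
          + ‖y1 * y2 - (C : ℂ) ^ 2 * q‖)
        / (C ^ 2 - ‖y2‖ ^ 2) := by
  have hy2' : ‖y2‖ ^ 2 < C ^ 2 := by
    nlinarith [norm_nonneg y2]
  set D : ℝ := C ^ 2 - ‖y2‖ ^ 2 with hDdef
  have hDpos : 0 < D := by rw [hDdef]; linarith
  have hDne : (D : ℂ) ≠ 0 := by
    exact_mod_cast (ne_of_gt hDpos)
  set A : ℂ := (C : ℂ) * (y1 - (starRingEnd ℂ) y2 * q) with hAdef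
  set B : ℂ := y1 * y2 - (C : ℂ) ^ 2 * q with hBdef
  have hB : B ≠ 0 := sub_ne_zero.mpr hq
  have hDc : (D : ℂ) = (C : ℂ) ^ 2 - y2 * (starRingEnd ℂ) y2 := by
    rw [Complex.mul_conj, ← Complex.sq_norm, hDdef]
    push_cast
    ring
  have hDne' : (C : ℂ) ^ 2 - y2 * (starRingEnd ℂ) y2 ≠ 0 := by
    rw [← hDc]; exact hDne
  -- denominator nonzero on closed disc
  have hden : ∀ ω : ℂ, ‖ω‖ ≤ 1 → y2 * ω - (C : ℂ) ≠ 0 := by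
    intro ω hω h
    rw [sub_eq_zero] at h
    have h1 : ‖y2 * ω‖ = C := by
      rw [h, Complex.norm_real, Real.norm_eq_abs, abs_of_pos hC]
    rw [norm_mul] at h1
    nlinarith [norm_nonneg y2, norm_nonneg ω]
  -- the key algebraic identity
  have key : ∀ ω : ℂ, y2 * ω - (C : ℂ) ≠ 0 →
      ((C : ℂ) * q * ω - y1) / (y2 * ω - (C : ℂ)) =
        A / (D : ℂ) + B / (D : ℂ) *
          (((starRingEnd ℂ) y2 - (C : ℂ) * ω) / (y2 * ω - (C : ℂ))) := by
    intro ω hω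
    rw [hAdef, hBdef, hDc]
    rw [div_mul_div_comm, div_add_div _ _ hDne' (mul_ne_zero hDne' hω),
      div_eq_div_iff hω (mul_ne_zero hDne' (mul_ne_zero hDne' hω))]
    ring
  clear_value A B D
  -- Blaschke bound
  have hbl : ∀ ω : ℂ, ‖ω‖ ≤ 1 →
      ‖(starRingEnd ℂ) y2 - (C : ℂ) * ω‖ ≤ ‖y2 * ω - (C : ℂ)‖ := by
    intro ω hω
    have hn : Complex.normSq ((starRingEnd ℂ) y2 - (C : ℂ) * ω) ≤
        Complex.normSq (y2 * ω - (C : ℂ)) := by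
      have h1 : ω.re ^ 2 + ω.im ^ 2 ≤ 1 := by
        have := Complex.sq_norm ω
        rw [Complex.normSq_apply] at this
        nlinarith [norm_nonneg ω]
      have h2 : y2.re ^ 2 + y2.im ^ 2 < C ^ 2 := by
        have := Complex.sq_norm y2
        rw [Complex.normSq_apply] at this
        nlinarith
      simp only [Complex.normSq_apply, Complex.sub_re, Complex.sub_im, Complex.mul_re,
        Complex.mul_im, Complex.ofReal_re, Complex.ofReal_im, Complex.conj_re, Complex.conj_im]
      nlinarith [mul_nonneg (le_of_lt (by linarith : (0:ℝ) < C ^ 2 - (y2.re ^ 2 + y2.im ^ 2)))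
        (by linarith : (0:ℝ) ≤ 1 - (ω.re ^ 2 + ω.im ^ 2))]
    rw [Complex.norm_def, Complex.norm_def]
    exact Real.sqrt_le_sqrt hn
  have hDabs : ‖((D : ℝ) : ℂ)‖ = D := by
    rw [Complex.norm_real, Real.norm_eq_abs, _root_.abs_of_pos hDpos]
  -- upper bound
  have hup : ∀ ω : ℂ, ‖ω‖ ≤ 1 →
      ‖((C : ℂ) * q * ω - y1) / (y2 * ω - (C : ℂ))‖ ≤
        (‖A‖ + ‖B‖) / D := by
    intro ω hω
    rw [key ω (hden ω hω)]
    have hg : ‖((starRingEnd ℂ) y2 - (C : ℂ) * ω) / (y2 * ω - (C : ℂ))‖ ≤ 1 := by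
      rw [norm_div]
      exact div_le_one_of_le₀ (hbl ω hω) (norm_nonneg _)
    calc ‖A / (D : ℂ) + B / (D : ℂ) *
          (((starRingEnd ℂ) y2 - (C : ℂ) * ω) / (y2 * ω - (C : ℂ)))‖
        ≤ ‖A / (D : ℂ)‖ + ‖B / (D : ℂ) *
          (((starRingEnd ℂ) y2 - (C : ℂ) * ω) / (y2 * ω - (C : ℂ)))‖ := by
          exact norm_add_le _ _
      _ ≤ ‖A‖ / D + ‖B‖ / D * 1 := by
          rw [norm_mul (B / ((D : ℝ) : ℂ)), norm_div A,
            norm_div B, hDabs]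
          gcongr
      _ = (‖A‖ + ‖B‖) / D := by ring
  -- construct the maximizer
  set w : ℂ := if A = 0 then 1 else ((‖A‖ : ℝ) : ℂ)⁻¹ * A with hwdef
  have hw1 : ‖w‖ = 1 := by
    rw [hwdef]
    split_ifs with h
    · simp
    · rw [norm_mul, norm_inv, Complex.norm_real, Real.norm_eq_abs,
        _root_.abs_of_nonneg (norm_nonneg A)]
      field_simp [norm_ne_zero_iff.mpr h]
  have hAw : ((‖A‖ : ℝ) : ℂ) * w = A := by
    rw [hwdef]
    split_ifs with h
    · simp [h]
    · have hA0 : ((‖A‖ : ℝ) : ℂ) ≠ 0 := by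
        exact_mod_cast norm_ne_zero_iff.mpr h
      field_simp
  clear_value w
  set u : ℂ := ((‖B‖ : ℝ) : ℂ) * B⁻¹ * w with hudef
  have hu1 : ‖u‖ = 1 := by
    rw [hudef, norm_mul, norm_mul, norm_inv, Complex.norm_real, Real.norm_eq_abs,
      _root_.abs_of_nonneg (norm_nonneg B), hw1]
    field_simp [norm_ne_zero_iff.mpr hB]
  have hBu : B * u = ((‖B‖ : ℝ) : ℂ) * w := by
    rw [hudef]
    field_simp
  clear_value u
  have hCu : (C : ℂ) + u * y2 ≠ 0 := by
    intro h
    have h1 : u * y2 = -(C : ℂ) := by linear_combination h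
    have h2 : ‖u * y2‖ = ‖-(C : ℂ)‖ := by rw [h1]
    rw [norm_mul, hu1, one_mul, norm_neg, Complex.norm_real, Real.norm_eq_abs,
      _root_.abs_of_pos hC] at h2
    linarith
  set ω₀ : ℂ := (u * C + (starRingEnd ℂ) y2) / ((C : ℂ) + u * y2) with hω₀def
  have huu : u * (starRingEnd ℂ) u = 1 := by
    rw [Complex.mul_conj, ← Complex.sq_norm, hu1]
    norm_num
  have hω₀1 : ‖ω₀‖ = 1 := by
    have hnum : u * C + (starRingEnd ℂ) y2 = u * (starRingEnd ℂ) ((C : ℂ) + u * y2) := by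
      rw [map_add, map_mul, Complex.conj_ofReal]
      linear_combination (-((starRingEnd ℂ) y2)) * huu
    rw [hω₀def, norm_div, hnum, norm_mul, hu1, one_mul, Complex.norm_conj]
    field_simp [norm_ne_zero_iff.mpr hCu]
  have hden₀ : y2 * ω₀ - (C : ℂ) ≠ 0 := hden ω₀ (le_of_eq hω₀1)
  have hgω : ((starRingEnd ℂ) y2 - (C : ℂ) * ω₀) / (y2 * ω₀ - (C : ℂ)) = u := by
    have h1 : (starRingEnd ℂ) y2 - (C : ℂ) * ω₀ = u * (y2 * ω₀ - (C : ℂ)) := by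
      rw [hω₀def]
      field_simp
      ring
    rw [h1, mul_div_assoc, div_self hden₀, mul_one]
  clear_value ω₀
  set M : ℝ := (‖A‖ + ‖B‖) / D with hMdef
  have hMnn : 0 ≤ M := by
    rw [hMdef]
    apply div_nonneg _ (le_of_lt hDpos)
    positivity
  have hfω₀ : ((C : ℂ) * q * ω₀ - y1) / (y2 * ω₀ - (C : ℂ)) = ((M : ℝ) : ℂ) * w := by
    rw [key ω₀ hden₀, hgω]
    have h2 : A / (D : ℂ) + B / (D : ℂ) * u = (A + B * u) / (D : ℂ) := by ring
    rw [h2, hBu, ← hAw, hMdef]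
    push_cast
    field_simp
  have habs₀ : ‖((C : ℂ) * q * ω₀ - y1) / (y2 * ω₀ - (C : ℂ))‖ = M := by
    rw [hfω₀, norm_mul, Complex.norm_real, Real.norm_eq_abs, hw1, mul_one, _root_.abs_of_nonneg hMnn]
  have hMeq : (C * ‖y1 - (starRingEnd ℂ) y2 * q‖
          + ‖B‖) / D = M := by
    rw [hMdef, hAdef, norm_mul, Complex.norm_real, Real.norm_eq_abs, _root_.abs_of_pos hC]
  rw [hMeq]
  apply le_antisymm
  · apply csSup_le
    · exact ⟨M, ω₀, le_of_eq hω₀1, habs₀.symm⟩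
    · rintro t ⟨ω, hω, rfl⟩
      exact hup ω hω
  · apply le_csSup
    · exact ⟨M, by rintro t ⟨ω, hω, rfl⟩; exact hup ω hω⟩
    · exact ⟨ω₀, le_of_eq hω₀1, habs₀.symm⟩
end
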